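/- arXiv:1006.3515 — 3 statements merged into one kernel-verified Lean document; each statement's English description precedes it below -/
import Mathlib

section
/- Every free group F is residually a finite p-group for every prime p: for any nontrivial element u ∈ F and any prime p, there exists a homomorphism φ from F onto a finite p-group with φ(u) ≠ 1. -/
namespace StmtAux
open Matrix List

variable {R : Type} [CommRing R] {β : Type} [DecidableEq β] {α : Type}

/-- sign of a boolean as ring element -/
def sgn (R : Type) [CommRing R] (b : Bool) : R := if b then 1 else -1

lemma sgn_mul_sgn (b : Bool) : sgn R b * sgn R b = 1 := by cases b <;> simp [sgn]

def coeff (R : Type) [CommRing R] (W : List (β × Bool)) (t : β) (i : ℕ) : R :=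
  match W[i]? with
  | some x => if x.1 = t then sgn R x.2 else 0
  | none => 0

lemma coeff_self (W : List (β × Bool)) (i : ℕ) (h : i < W.length) :
    coeff R W (W[i].1) i = sgn R (W[i].2) := by
  simp [coeff, List.getElem?_eq_getElem h]

def mat (R : Type) [CommRing R] (W : List (β × Bool)) (t : β) :
    Matrix (Fin (W.length + 1)) (Fin (W.length + 1)) R :=
  Matrix.of fun i l => if (l : ℕ) = (i : ℕ) + 1 then coeff R W t (i : ℕ) else 0

def fac (R : Type) [CommRing R] (W : List (β × Bool)) (x : β × Bool) :
    Matrix (Fin (W.length + 1)) (Fin (W.length + 1)) R :=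
  1 + sgn R x.2 • mat R W x.1

lemma prod_take_entry (W : List (β × Bool)) :
    ∀ k, k ≤ W.length → ∀ l : Fin (W.length + 1), k ≤ (l : ℕ) →
      (((W.map (fac R W)).take k).prod) 0 l = if (l : ℕ) = k then 1 else 0 := by
  intro k
  induction k with
  | zero =>
    intro _ l _
    simp only [List.take_zero, List.prod_nil, Matrix.one_apply]
    by_cases h : (l : ℕ) = 0
    · have : (0 : Fin (W.length + 1)) = l := by
        apply Fin.ext; simp [h]
      simp [this, h]
    · have : (0 : Fin (W.length + 1)) ≠ l := by
        intro he; exact h (by simp [← he])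
      simp [this, h]
  | succ k ih =>
    intro hk l hl
    have hkW : k < (W.map (fac R W)).length := by simpa using hk
    rw [List.prod_take_succ _ k hkW]
    have hget : (W.map (fac R W))[k] = fac R W (W[k]'(by simpa using hk)) := by
      simp
    rw [hget, Matrix.mul_apply]
    have hl1 : 1 ≤ (l : ℕ) := by omega
    have hlm : (l : ℕ) ≤ W.length := by omega
    set c0 : Fin (W.length + 1) := ⟨(l : ℕ) - 1, by omega⟩ with hc0
    rw [Finset.sum_eq_single c0]
    · -- main term
      have hfacentry : fac R W (W[k]'(by simpa using hk)) c0 l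
          = sgn R ((W[k]'(by simpa using hk)).2) * coeff R W ((W[k]'(by simpa using hk)).1) ((l : ℕ) - 1) := by
        simp only [fac, Matrix.add_apply, Matrix.smul_apply, mat, Matrix.of_apply]
        have h1 : (l : ℕ) = (c0 : ℕ) + 1 := by simp [hc0]; omega
        have hne : c0 ≠ l := by
          intro he
          have : (c0 : ℕ) = (l : ℕ) := by rw [he]
          omega
        rw [Matrix.one_apply_ne hne, if_pos h1]
        simp [hc0, smul_eq_mul]
      rw [hfacentry]
      by_cases hcase : (l : ℕ) = k + 1
      · have hc0k : (c0 : ℕ) = k := by simp [hc0]; omega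
        have hPk : (((W.map (fac R W)).take k).prod) 0 c0 = 1 := by
          rw [ih (by omega) c0 (by omega), if_pos hc0k]
        rw [hPk, one_mul]
        have : (l : ℕ) - 1 = k := by omega
        rw [this]
        rw [coeff_self W k (by omega), sgn_mul_sgn, if_pos hcase]
      · have hPk : (((W.map (fac R W)).take k).prod) 0 c0 = 0 := by
          rw [ih (by omega) c0 (by simp [hc0]; omega)]
          rw [if_neg (by simp [hc0]; omega)]
        rw [hPk, zero_mul, if_neg hcase]
    · -- other indices vanish
      intro c _ hc
      have hfc : fac R W (W[k]'(by simpa using hk)) c l = if c = l then 1 else 0 := by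
        simp only [fac, Matrix.add_apply, Matrix.smul_apply, mat, Matrix.of_apply]
        have : (l : ℕ) ≠ (c : ℕ) + 1 := by
          intro he
          apply hc
          apply Fin.ext
          simp [hc0]; omega
        rw [if_neg this, Matrix.one_apply]
        simp
      rw [hfc]
      by_cases hcl : c = l
      · rw [if_pos hcl, mul_one, hcl]
        rw [ih (by omega) l (by omega), if_neg (by omega)]
      · rw [if_neg hcl, mul_zero]
    · intro h
      exact absurd (Finset.mem_univ c0) h

lemma prod_entry (W : List (β × Bool)) :
    ((W.map (fac R W)).prod) 0 (Fin.last W.length) = 1 := by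
  have h1 : ((W.map (fac R W)).take W.length).prod = (W.map (fac R W)).prod := by
    rw [List.take_of_length_le (by simp)]
  rw [← h1]
  rw [prod_take_entry W W.length le_rfl (Fin.last W.length) (by simp)]
  simp

section Nilpotent

variable {n : ℕ}

/-- strictly upper triangular with shift k -/
def SU (A : Matrix (Fin n) (Fin n) R) (k : ℕ) : Prop :=
  ∀ i j : Fin n, (j : ℕ) < (i : ℕ) + k → A i j = 0

lemma SU.mul {A B : Matrix (Fin n) (Fin n) R} {k : ℕ} (hA : SU A k) (hB : SU B 1) :
    SU (A * B) (k + 1) := by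
  intro i j hj
  rw [Matrix.mul_apply]
  apply Finset.sum_eq_zero
  intro c _
  by_cases hc : (c : ℕ) < (i : ℕ) + k
  · rw [hA i c hc, zero_mul]
  · rw [hB c j (by omega), mul_zero]

lemma SU.neg {A : Matrix (Fin n) (Fin n) R} {k : ℕ} (hA : SU A k) : SU (-A) k := by
  intro i j hj; simp [hA i j hj]

lemma SU.pow {A : Matrix (Fin n) (Fin n) R} (hA : SU A 1) : ∀ k, SU (A ^ k) k := by
  intro k
  induction k with
  | zero =>
    intro i j hj
    rw [pow_zero, Matrix.one_apply_ne]
    intro he; rw [he] at hj; omega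
  | succ k ih =>
    rw [pow_succ]
    exact ih.mul hA

lemma SU.pow_eq_zero {A : Matrix (Fin (n + 1)) (Fin (n + 1)) R} (hA : SU A 1) {k : ℕ}
    (hk : n + 1 ≤ k) : A ^ k = 0 := by
  ext i j
  rw [Matrix.zero_apply]
  exact (hA.pow k) i j (by omega)

def uniGroup (R : Type) [CommRing R] (n : ℕ) :
    Subgroup (Matrix (Fin (n + 1)) (Fin (n + 1)) R)ˣ where
  carrier := {v | ∃ N, SU N 1 ∧ (v : Matrix (Fin (n + 1)) (Fin (n + 1)) R) = 1 + N}
  one_mem' := ⟨0, fun i j _ => rfl, by rw [add_zero]; rfl⟩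
  mul_mem' := by
    rintro a b ⟨N, hN, hval⟩ ⟨N', hN', hval'⟩
    refine ⟨N + N' + N * N', ?_, ?_⟩
    · intro i j hj
      have h2 : (N * N') i j = 0 := (hN.mul hN') i j (by omega)
      simp [Matrix.add_apply, hN i j hj, hN' i j hj, h2]
    · rw [Units.val_mul, hval, hval']
      noncomm_ring
  inv_mem' := by
    rintro a ⟨N, hN, hval⟩
    have hG : ((a : Matrix (Fin (n + 1)) (Fin (n + 1)) R)) *
        (∑ i ∈ Finset.range (n + 2), (-N) ^ i) = 1 := by
      have hpow : (-N) ^ (n + 2) = 0 := (hN.neg).pow_eq_zero (by omega)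
      have := mul_geom_sum (-N) (n + 2)
      rw [hpow] at this
      rw [hval]
      have h2 : (1 + N : Matrix (Fin (n + 1)) (Fin (n + 1)) R) = -(-N - 1) := by noncomm_ring
      rw [h2, neg_mul, this]
      noncomm_ring
    refine ⟨∑ i ∈ Finset.range (n + 1), (-N) ^ (i + 1), ?_, ?_⟩
    · intro i j hj
      rw [Matrix.sum_apply]
      apply Finset.sum_eq_zero
      intro c _
      exact ((hN.neg).pow (c + 1)) i j (by omega)
    · have hsum : (∑ i ∈ Finset.range (n + 2), (-N) ^ i)
          = 1 + ∑ i ∈ Finset.range (n + 1), (-N) ^ (i + 1) := by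
        rw [Finset.sum_range_succ' (fun i => (-N) ^ i) (n + 1), pow_zero]
        exact add_comm _ _
      rw [← hsum]
      exact Units.inv_eq_of_mul_eq_one_right hG

lemma isPGroup_uniGroup (p : ℕ) [Fact p.Prime] [CharP R p] :
    IsPGroup p (uniGroup R n) := by
  intro v
  refine ⟨n + 1, ?_⟩
  obtain ⟨N, hN, hval⟩ := v.2
  have hNp : N ^ (p ^ (n + 1)) = 0 :=
    hN.pow_eq_zero (Nat.lt_pow_self (n := n + 1) (Fact.out (p := p.Prime)).one_lt).le
  have hv : ((v : (Matrix (Fin (n + 1)) (Fin (n + 1)) R)ˣ) : Matrix (Fin (n + 1)) (Fin (n + 1)) R) ^ (p ^ (n + 1)) = 1 := by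
    rw [hval, add_pow_char_pow_of_commute p (n + 1) (Commute.one_left N), one_pow, hNp, add_zero]
  apply Subtype.ext
  rw [SubgroupClass.coe_pow]
  apply Units.ext
  rw [Units.val_pow_eq_pow_val, hv]
  rfl

end Nilpotent

/-- squared nilpotent part is zero when adjacent letters are distinct -/
lemma mat_mul_mat (W : List (β × Bool)) (hW : W.Chain' (fun x y => x.1 ≠ y.1)) (t : β) :
    mat R W t * mat R W t = 0 := by
  have key : ∀ i : ℕ, coeff R W t i * coeff R W t (i + 1) = 0 := by
    intro i
    by_cases hi : i + 1 < W.length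
    · have hne : (W[i]'(by omega)).1 ≠ (W[i + 1]'hi).1 := by
        rw [List.Chain', List.isChain_iff_getElem] at hW
        have := hW i (by omega)
        simpa [List.get_eq_getElem] using this
      by_cases h1 : (W[i]'(by omega)).1 = t
      · have h2 : (W[i + 1]'hi).1 ≠ t := fun h => hne (h1.trans h.symm)
        have : coeff R W t (i + 1) = 0 := by
          simp [coeff, List.getElem?_eq_getElem hi, h2]
        rw [this, mul_zero]
      · have : coeff R W t i = 0 := by
          simp [coeff, List.getElem?_eq_getElem (show i < W.length by omega), h1]
        rw [this, zero_mul]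
    · have : coeff R W t (i + 1) = 0 := by
        simp [coeff, List.getElem?_eq_none (show W.length ≤ i + 1 by omega)]
      rw [this, mul_zero]
  ext i j
  rw [Matrix.mul_apply, Matrix.zero_apply]
  apply Finset.sum_eq_zero
  intro c _
  simp only [mat, Matrix.of_apply]
  by_cases h1 : (c : ℕ) = (i : ℕ) + 1
  · by_cases h2 : (j : ℕ) = (c : ℕ) + 1
    · rw [if_pos h1, if_pos h2, h1]
      exact key (i : ℕ)
    · rw [if_neg h2, mul_zero]
  · rw [if_neg h1, zero_mul]

/-- the letter-doubling map -/
def gW : α × Bool → List ((α × Bool) × Bool)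
  | (s, true) => [((s, false), true), ((s, true), true)]
  | (s, false) => [((s, true), false), ((s, false), false)]

lemma chain'_bind_gW : ∀ L : List (α × Bool),
    L.Chain' (fun a b => a.1 = b.1 → b.2 = a.2) →
    (L.flatMap gW).Chain' (fun x y : (α × Bool) × Bool => x.1 ≠ y.1) := by
  intro L
  induction L with
  | nil => intro _; simp [List.Chain']
  | cons x t ih =>
    intro h
    obtain ⟨hhd, htl⟩ := List.isChain_cons.mp h
    rw [List.flatMap_cons, List.Chain', List.isChain_append]
    refine ⟨?_, ih htl, ?_⟩
    · obtain ⟨s, b⟩ := x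
      cases b <;> simp [gW]
    · intro z hz y hy
      obtain ⟨s, b⟩ := x
      cases t with
      | nil => simp at hy
      | cons x' t' =>
        obtain ⟨s', b'⟩ := x'
        have hR : s = s' → b' = b := hhd (s', b') rfl
        rw [List.flatMap_cons] at hy
        cases b <;> cases b' <;>
          simp [gW] at hz hy <;>
          subst hz <;> subst hy <;>
          simp <;>
          intro hss <;> exact (by simpa using hR hss)

lemma chain'_toWord [DecidableEq α] (u : FreeGroup α) :
    u.toWord.Chain' (fun a b => a.1 = b.1 → b.2 = a.2) := by
  rw [List.Chain', List.isChain_iff_getElem]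
  intro i h
  intro heq
  by_contra hne
  have hi1 : i + 1 < u.toWord.length := by omega
  have hi : i < u.toWord.length := by omega
  have hb2 : (u.toWord[i + 1]'hi1).2 = !(u.toWord[i]'hi).2 := by
    cases h1 : (u.toWord[i]'hi).2 <;> cases h2 : (u.toWord[i + 1]'hi1).2 <;> simp_all
  have hbeq : u.toWord[i + 1]'hi1 = ((u.toWord[i]'hi).1, !(u.toWord[i]'hi).2) :=
    Prod.ext heq.symm hb2
  have hdecomp : u.toWord = u.toWord.take i ++
      ((u.toWord[i]'hi).1, (u.toWord[i]'hi).2) :: ((u.toWord[i]'hi).1, !(u.toWord[i]'hi).2)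
        :: u.toWord.drop (i + 2) := by
    conv_lhs => rw [← List.take_append_drop i u.toWord]
    congr 1
    rw [List.drop_eq_getElem_cons hi, List.drop_eq_getElem_cons hi1, hbeq]
  have hred : FreeGroup.reduce u.toWord = u.toWord.take i ++
      ((u.toWord[i]'hi).1, (u.toWord[i]'hi).2) :: ((u.toWord[i]'hi).1, !(u.toWord[i]'hi).2)
        :: u.toWord.drop (i + 2) := by
    rw [FreeGroup.reduce_toWord]; exact hdecomp
  exact FreeGroup.reduce.not hred

/-- the unit 1 + N_t -/
def Umat (R : Type) [CommRing R] (W : List (β × Bool))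
    (hW : W.Chain' (fun x y => x.1 ≠ y.1)) (t : β) :
    (Matrix (Fin (W.length + 1)) (Fin (W.length + 1)) R)ˣ where
  val := 1 + mat R W t
  inv := 1 - mat R W t
  val_inv := by
    rw [show (1 + mat R W t) * (1 - mat R W t) = 1 - mat R W t * mat R W t from by noncomm_ring,
      mat_mul_mat W hW t, sub_zero]
  inv_val := by
    rw [show (1 - mat R W t) * (1 + mat R W t) = 1 - mat R W t * mat R W t from by noncomm_ring,
      mat_mul_mat W hW t, sub_zero]

lemma SU_mat (W : List (β × Bool)) (t : β) : SU (mat R W t) 1 := by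
  intro i j hj
  simp only [mat, Matrix.of_apply]
  rw [if_neg (by omega)]

lemma Umat_mem (W : List (β × Bool)) (hW : W.Chain' (fun x y => x.1 ≠ y.1)) (t : β) :
    Umat R W hW t ∈ uniGroup R W.length :=
  ⟨mat R W t, SU_mat W t, rfl⟩

end StmtAux

open StmtAux in
theorem stmt_3 (α : Type) (u : FreeGroup α) (hu : u ≠ 1) (p : ℕ) (hp : p.Prime) :
    ∃ (P : Type) (_ : Group P) (_ : Fintype P) (_ : IsPGroup p P)
      (φ : FreeGroup α →* P),
      Function.Surjective φ ∧ φ u ≠ 1 := by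
  classical
  haveI : Fact p.Prime := ⟨hp⟩
  haveI : Fact (1 < p) := ⟨hp.one_lt⟩
  haveI : NeZero p := ⟨hp.ne_zero⟩
  set R := ZMod p with hR
  set L : List (α × Bool) := u.toWord with hLdef
  have hL : L ≠ [] := fun h => hu (FreeGroup.toWord_eq_nil_iff.mp h)
  set W : List ((α × Bool) × Bool) := L.flatMap gW with hWdef
  have hWchain : W.Chain' (fun x y : (α × Bool) × Bool => x.1 ≠ y.1) :=
    chain'_bind_gW L (chain'_toWord u)
  have hWne : W.length ≠ 0 := by
    cases hLc : L with
    | nil => exact absurd hLc hL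
    | cons hd tl =>
      rw [hWdef, hLc, List.flatMap_cons]
      obtain ⟨s, b⟩ := hd
      cases b <;> simp [gW]
  -- the representation
  set f : α → (Matrix (Fin (W.length + 1)) (Fin (W.length + 1)) R)ˣ :=
    fun s => Umat R W hWchain (s, false) * Umat R W hWchain (s, true) with hfdef
  have hmem : ∀ x : FreeGroup α, FreeGroup.lift f x ∈ uniGroup R W.length := by
    intro x
    induction x using FreeGroup.induction_on with
    | C1 => rw [map_one]; exact one_mem _
    | of s =>
      rw [FreeGroup.lift_apply_of]
      exact mul_mem (Umat_mem W hWchain _) (Umat_mem W hWchain _)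
    | inv_of s hs => rw [map_inv]; exact inv_mem hs
    | mul x y hx hy => rw [map_mul]; exact mul_mem hx hy
  -- compute the value of lift f u
  have hlist : ∀ l : List (α × Bool),
      ((l.map fun x => cond x.2 (f x.1) (f x.1)⁻¹).map (Units.val)).prod
        = ((l.flatMap gW).map (fac R W)).prod := by
    intro l
    induction l with
    | nil => simp
    | cons x t ih =>
      rw [List.map_cons, List.map_cons, List.prod_cons, List.flatMap_cons, List.map_append,
        List.prod_append, ih]
      congr 1
      obtain ⟨s, b⟩ := x
      cases b
      · show ((f s)⁻¹ : _ˣ).val = _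
        rw [hfdef]
        rw [mul_inv_rev, Units.val_mul]
        show (1 - mat R W (s, true)) * (1 - mat R W (s, false)) = _
        show _ = ((gW (s, false)).map (fac R W)).prod
        rw [show gW (s, false) = [((s, true), false), ((s, false), false)] from rfl]
        rw [List.map_cons, List.map_cons, List.map_nil, List.prod_cons, List.prod_cons,
          List.prod_nil, mul_one]
        simp [fac, sgn, sub_eq_add_neg]
      · show ((f s) : _ˣ).val = _
        rw [hfdef]
        rw [Units.val_mul]
        show (1 + mat R W (s, false)) * (1 + mat R W (s, true)) = _
        show _ = ((gW (s, true)).map (fac R W)).prod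
        rw [show gW (s, true) = [((s, false), true), ((s, true), true)] from rfl]
        rw [List.map_cons, List.map_cons, List.map_nil, List.prod_cons, List.prod_cons,
          List.prod_nil, mul_one]
        simp [fac, sgn]
  have hprod : ((FreeGroup.lift f u : _ˣ) : Matrix (Fin (W.length + 1)) (Fin (W.length + 1)) R)
      = (W.map (fac R W)).prod := by
    conv_lhs => rw [← FreeGroup.mk_toWord (x := u)]
    rw [FreeGroup.lift_mk]
    rw [show ((List.prod (L.map fun x => cond x.2 (f x.1) (f x.1)⁻¹) : _ˣ) :
          Matrix (Fin (W.length + 1)) (Fin (W.length + 1)) R)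
        = ((L.map fun x => cond x.2 (f x.1) (f x.1)⁻¹).map (Units.val)).prod from
      map_list_prod (Units.coeHom _) _]
    rw [hlist L]
  have hne1 : FreeGroup.lift f u ≠ 1 := by
    intro h
    rw [h] at hprod
    have h5 := prod_entry (R := R) W
    rw [← hprod] at h5
    have h0 : (0 : Fin (W.length + 1)) ≠ Fin.last W.length := by
      intro he
      have : (0 : ℕ) = W.length := congrArg Fin.val he
      omega
    rw [Units.val_one, Matrix.one_apply_ne h0] at h5
    exact one_ne_zero h5.symm
  -- assemble
  set ψ : FreeGroup α →* uniGroup R W.length :=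
    (FreeGroup.lift f).codRestrict (uniGroup R W.length) hmem with hψ
  refine ⟨↥ψ.range, inferInstance, Fintype.ofFinite _,
    (isPGroup_uniGroup p).to_subgroup ψ.range, ψ.rangeRestrict,
    ψ.rangeRestrict_surjective, ?_⟩
  intro h1
  apply hne1
  have h2 : (ψ u : (Matrix (Fin (W.length + 1)) (Fin (W.length + 1)) R)ˣ) = 1 := by
    have := congrArg (Subtype.val) (congrArg (Subtype.val) h1)
    simpa using this
  exact h2
end

section
/- Let F be a free group and p a prime. A cyclic subgroup ⟨u⟩ of F is p'-isolated (meaning: for every g ∈ F and every integer t coprime to p, g^t ∈ ⟨u⟩ implies g ∈ ⟨u⟩) whenever u = v^{p^m} for v not a proper power. Conversely, if u = v^{p^m t} with p ∤ t and t > 1 and v ≠ 1 not a proper power, then ⟨u⟩ is not p'-isolated. -/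
/-- `v` is not a proper power. -/
def NotProperPower {G : Type*} [Group G] (v : G) : Prop :=
  ∀ (w : G) (k : ℤ), v = w ^ k → k = 1 ∨ k = -1

/-- A subgroup `H` is `p'`-isolated. -/
def PPrimeIsolated {G : Type*} [Group G] (p : ℕ) (H : Subgroup G) : Prop :=
  ∀ (g : G) (t : ℤ), Int.gcd t p = 1 → g ^ t ∈ H → g ∈ H

private lemma notProperPower_ne_one {G : Type*} [Group G] {v : G} (hv : NotProperPower v) :
    v ≠ 1 := by
  intro h
  rcases hv 1 0 (by simp [h]) with h1 | h1 <;> simp at h1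

/-- Free groups are torsion-free, via Nielsen–Schreier. -/
private lemma freeGroup_not_isOfFinOrder {α : Type} {x : FreeGroup α} (hx : x ≠ 1) :
    ¬ IsOfFinOrder x := by
  intro hfin
  have hfinite : Finite (Subgroup.zpowers x) := hfin.finite_zpowers
  set H : Subgroup (FreeGroup α) := Subgroup.zpowers x with hH
  have hxH : x ∈ H := Subgroup.mem_zpowers x
  have hne : (⟨x, hxH⟩ : H) ≠ 1 := by
    intro h
    exact hx (congrArg Subtype.val h)
  rcases isEmpty_or_nonempty (IsFreeGroup.Generators H) with he | hne'
  · exact hne ((IsFreeGroup.toFreeGroup (G := H)).injective (Subsingleton.elim _ _))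
  · obtain ⟨b⟩ := hne'
    set h : H := IsFreeGroup.of b with hh
    have hfo : IsOfFinOrder h := isTorsion_of_finite h
    obtain ⟨n, hn, hpow⟩ := hfo.exists_pow_eq_one
    let φ : H →* Multiplicative ℤ :=
      IsFreeGroup.lift (fun _ => Multiplicative.ofAdd (1 : ℤ))
    have h1 : φ h = Multiplicative.ofAdd (1 : ℤ) := IsFreeGroup.lift_of _ _
    have h2 : (φ h) ^ n = 1 := by rw [← map_pow, hpow, map_one]
    have : (n : ℤ) = 0 := by
      have := congrArg Multiplicative.toAdd h2
      simpa [h1, toAdd_pow] using this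
    omega

private lemma exists_common_zpow {G : Type} [Group G] [IsFreeGroup G]
    [hsub : Subsingleton (IsFreeGroup.Generators G)] (x y : G) :
    ∃ (c : G) (i j : ℤ), x = c ^ i ∧ y = c ^ j := by
  rcases isEmpty_or_nonempty (IsFreeGroup.Generators G) with he | hne'
  · have : Subsingleton G := (IsFreeGroup.toFreeGroup (G := G)).injective.subsingleton
    exact ⟨1, 0, 0, by simpa using (Subsingleton.elim x 1), by simpa using (Subsingleton.elim y 1)⟩
  · obtain ⟨b⟩ := hne'
    set e := IsFreeGroup.toFreeGroup (G := G) with he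
    have key : ∀ z : FreeGroup (IsFreeGroup.Generators G),
        z ∈ Subgroup.zpowers (FreeGroup.of b) := by
      intro z
      have h1 : Subgroup.closure (Set.range (FreeGroup.of :
          IsFreeGroup.Generators G → FreeGroup (IsFreeGroup.Generators G))) = ⊤ :=
        FreeGroup.closure_range_of _
      have h2 : Set.range (FreeGroup.of :
          IsFreeGroup.Generators G → FreeGroup (IsFreeGroup.Generators G)) ⊆
          (Subgroup.zpowers (FreeGroup.of b) : Set (FreeGroup (IsFreeGroup.Generators G))) := by
        rintro _ ⟨b', rfl⟩
        rw [Subsingleton.elim b' b]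
        exact Subgroup.mem_zpowers _
      have h3 := (Subgroup.closure_le _).2 h2
      rw [h1] at h3
      exact h3 (Subgroup.mem_top z)
    obtain ⟨i, hi⟩ := Subgroup.mem_zpowers_iff.1 (key (e x))
    obtain ⟨j, hj⟩ := Subgroup.mem_zpowers_iff.1 (key (e y))
    refine ⟨e.symm (FreeGroup.of b), i, j, ?_, ?_⟩
    · have := congrArg e.symm hi
      rw [map_zpow, MulEquiv.symm_apply_apply] at this
      exact this.symm
    · have := congrArg e.symm hj
      rw [map_zpow, MulEquiv.symm_apply_apply] at this
      exact this.symm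

/-- If a free group is generated by two elements satisfying a nontrivial relation
`x ^ t = y ^ N`, then its set of free generators is a subsingleton. -/
private lemma generators_subsingleton {G : Type} [Group G] [IsFreeGroup G]
    (x y : G) (t N : ℤ) (hN : N ≠ 0)
    (hgen : Subgroup.closure ({x, y} : Set G) = ⊤) (hrel : x ^ t = y ^ N) :
    Subsingleton (IsFreeGroup.Generators G) := by
  by_contra hsub
  rw [not_subsingleton_iff_nontrivial] at hsub
  classical
  set β := IsFreeGroup.Generators G with hβ
  obtain ⟨b₁, b₂, hb⟩ : ∃ b₁ b₂ : β, b₁ ≠ b₂ := hsub.exists_pair_ne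
  let φ : (β → ℤ) → (G →* Multiplicative ℤ) :=
    fun w => IsFreeGroup.lift (fun b => Multiplicative.ofAdd (w b))
  have φ_of : ∀ (w : β → ℤ) (b : β), φ w (IsFreeGroup.of b) = Multiplicative.ofAdd (w b) :=
    fun w b => IsFreeGroup.lift_of _ _
  -- if a character kills x, it kills everything
  have hzero : ∀ w : β → ℤ, φ w x = 1 → w = 0 := by
    intro w hx1
    have hy1 : φ w y = 1 := by
      have := congrArg (φ w) hrel
      rw [map_zpow, map_zpow, hx1, one_zpow] at this
      have h0 := congrArg Multiplicative.toAdd this.symm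
      rw [toAdd_zpow] at h0
      simp only [toAdd_one, smul_eq_mul] at h0
      have : Multiplicative.toAdd (φ w y) = 0 := by
        rcases mul_eq_zero.1 h0 with h | h
        · exact absurd h hN
        · exact h
      have := congrArg Multiplicative.ofAdd this
      simpa using this
    have hφ1 : φ w = 1 := by
      have h1 : Set.EqOn (φ w) (1 : G →* Multiplicative ℤ) ({x, y} : Set G) := by
        rintro z hz
        rcases hz with rfl | hz
        · simpa using hx1
        · rcases hz with rfl
          simpa using hy1
      have h2 : Set.EqOn (φ w) (1 : G →* Multiplicative ℤ)
          (Subgroup.closure ({x, y} : Set G)) := MonoidHom.eqOn_closure h1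
      ext z
      have hz : z ∈ Subgroup.closure ({x, y} : Set G) := by rw [hgen]; trivial
      simpa using h2 hz
    funext b
    have := congrArg (fun f : G →* Multiplicative ℤ => f (IsFreeGroup.of b)) hφ1
    simp only [φ_of, MonoidHom.one_apply] at this
    simpa using congrArg Multiplicative.toAdd this
  -- additivity of w ↦ φ w x
  have hadd : ∀ w w' : β → ℤ, φ (w + w') = φ w * φ w' := by
    intro w w'
    apply IsFreeGroup.ext_hom
    intro a
    simp [φ_of, ofAdd_add]
  have hsmul : ∀ (c : ℤ) (w : β → ℤ), φ (c • w) = (zpowGroupHom c).comp (φ w) := by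
    intro c w
    apply IsFreeGroup.ext_hom
    intro a
    rw [MonoidHom.comp_apply, φ_of, φ_of, zpowGroupHom_apply]
    have : (c • w) a = w a * c := by
      simp [Pi.smul_apply, smul_eq_mul, mul_comm]
    rw [this]
    exact Int.ofAdd_mul _ _
  set E : (β → ℤ) → ℤ := fun w => Multiplicative.toAdd (φ w x) with hE
  have hEadd : ∀ w w', E (w + w') = E w + E w' := by
    intro w w'
    simp [hE, hadd, toAdd_mul]
  have hEsmul : ∀ (c : ℤ) w, E (c • w) = c * E w := by
    intro c w
    have h1 := congrArg (fun f : G →* Multiplicative ℤ => Multiplicative.toAdd (f x)) (hsmul c w)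
    simp only [MonoidHom.comp_apply, zpowGroupHom_apply, toAdd_zpow, smul_eq_mul] at h1
    exact h1
  have hEzero : ∀ w, E w = 0 → w = 0 := by
    intro w hw
    apply hzero
    have : Multiplicative.toAdd (φ w x) = 0 := hw
    have := congrArg Multiplicative.ofAdd this
    simpa using this
  set w₁ : β → ℤ := fun b => if b = b₁ then 1 else 0 with hw₁
  set w₂ : β → ℤ := fun b => if b = b₂ then 1 else 0 with hw₂
  set a₁ := E w₁ with ha₁
  set a₂ := E w₂ with ha₂
  have h0 : E (a₂ • w₁ + (-a₁) • w₂) = 0 := by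
    rw [hEadd, hEsmul, hEsmul]; ring
  have hw0 := hEzero _ h0
  have hb₁ : a₂ = 0 := by
    have h := congrArg (fun f : β → ℤ => f b₁) hw0
    simp only [Pi.add_apply, Pi.smul_apply, smul_eq_mul, Pi.zero_apply] at h
    have e1 : w₁ b₁ = 1 := by simp [hw₁]
    have e2 : w₂ b₁ = 0 := by simp [hw₂, hb]
    rw [e1, e2] at h
    omega
  have hb₂ : a₁ = 0 := by
    have h := congrArg (fun f : β → ℤ => f b₂) hw0
    simp only [Pi.add_apply, Pi.smul_apply, smul_eq_mul, Pi.zero_apply] at h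
    have e1 : w₁ b₂ = 0 := by simp [hw₁, Ne.symm hb]
    have e2 : w₂ b₂ = 1 := by simp [hw₂]
    rw [e1, e2] at h
    omega
  have hw₁0 := hEzero w₁ hb₂
  have := congrArg (fun f : β → ℤ => f b₁) hw₁0
  simp [hw₁] at this

theorem stmt_5 (α : Type) (p : ℕ) (hp : p.Prime) :
    (∀ (u v : FreeGroup α) (m : ℕ), NotProperPower v → u = v ^ (p ^ m) →
      PPrimeIsolated p (Subgroup.zpowers u)) ∧
    (∀ (u v : FreeGroup α) (m : ℕ) (t : ℕ), ¬ p ∣ t → 1 < t → v ≠ 1 →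
      NotProperPower v → u = v ^ (p ^ m * t) →
      ¬ PPrimeIsolated p (Subgroup.zpowers u)) := by
  constructor
  · -- forward direction
    intro u v m hv hu g t hgcd hmem
    have hv1 : v ≠ 1 := notProperPower_ne_one hv
    have hvinj : Function.Injective (fun n : ℤ => v ^ n) :=
      injective_zpow_iff_not_isOfFinOrder.2 (freeGroup_not_isOfFinOrder hv1)
    have ht0 : t ≠ 0 := by
      rintro rfl
      simp [Int.gcd] at hgcd
      exact hp.ne_one hgcd
    by_cases hg1 : g = 1
    · rw [hg1]; exact one_mem _
    obtain ⟨s, hs⟩ := Subgroup.mem_zpowers_iff.1 hmem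
    have hs0 : s ≠ 0 := by
      rintro rfl
      have hgt1 : g ^ t = 1 := by simpa using hs.symm
      have : IsOfFinOrder g := by
        refine isOfFinOrder_iff_pow_eq_one.2 ⟨t.natAbs, by omega, ?_⟩
        rcases Int.natAbs_eq t with h | h
        · rw [← zpow_natCast, ← h, hgt1]
        · rw [← zpow_natCast, ← neg_neg (t.natAbs : ℤ), ← h, zpow_neg, hgt1, inv_one]
      exact freeGroup_not_isOfFinOrder hg1 this
    set P : ℤ := ((p ^ m : ℕ) : ℤ) with hP
    have hP0 : P ≠ 0 := by
      rw [hP]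
      exact_mod_cast pow_ne_zero m hp.ne_zero
    have hu' : u = v ^ P := by rw [hu, hP, zpow_natCast]
    have hrel : g ^ t = v ^ (P * s) := by
      rw [← hs, hu', ← zpow_mul]
    set N : ℤ := P * s with hN
    have hN0 : N ≠ 0 := mul_ne_zero hP0 hs0
    -- the subgroup generated by g and v
    have hgH : g ∈ Subgroup.closure ({g, v} : Set (FreeGroup α)) :=
      Subgroup.subset_closure (by left; rfl)
    have hvH : v ∈ Subgroup.closure ({g, v} : Set (FreeGroup α)) :=
      Subgroup.subset_closure (by right; rfl)
    set x : Subgroup.closure ({g, v} : Set (FreeGroup α)) := ⟨g, hgH⟩ with hx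
    set y : Subgroup.closure ({g, v} : Set (FreeGroup α)) := ⟨v, hvH⟩ with hy
    have hrelH : x ^ t = y ^ N := by
      apply Subtype.ext
      rw [SubgroupClass.coe_zpow, SubgroupClass.coe_zpow]
      exact hrel
    have hgen : Subgroup.closure ({x, y} :
        Set (Subgroup.closure ({g, v} : Set (FreeGroup α)))) = ⊤ := by
      have h1 := Subgroup.closure_closure_coe_preimage (k := ({g, v} : Set (FreeGroup α)))
      have h2 : (((↑) : Subgroup.closure ({g, v} : Set (FreeGroup α)) → FreeGroup α) ⁻¹'
          ({g, v} : Set (FreeGroup α))) = ({x, y} :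
          Set (Subgroup.closure ({g, v} : Set (FreeGroup α)))) := by
        ext ⟨z, hz⟩
        simp [hx, hy, Set.mem_preimage, Subtype.ext_iff]
      rwa [h2] at h1
    haveI := generators_subsingleton x y t N hN0 hgen hrelH
    obtain ⟨c, i, j, hxc, hyc⟩ := exists_common_zpow x y
    have hgc : g = (c : FreeGroup α) ^ i := by
      have := congrArg (Subtype.val) hxc
      rwa [SubgroupClass.coe_zpow] at this
    have hvc : v = (c : FreeGroup α) ^ j := by
      have := congrArg (Subtype.val) hyc
      rwa [SubgroupClass.coe_zpow] at this
    obtain ⟨a, hga⟩ : ∃ a : ℤ, g = v ^ a := by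
      rcases hv _ _ hvc with rfl | rfl
      · refine ⟨i, ?_⟩
        have hcv : (c : FreeGroup α) = v := by rw [zpow_one] at hvc; exact hvc.symm
        rw [hgc, hcv]
      · refine ⟨-i, ?_⟩
        have hcv : (c : FreeGroup α) = v⁻¹ := by
          have h2 := congrArg (fun z : FreeGroup α => z⁻¹) hvc
          simp only [zpow_neg, zpow_one, inv_inv] at h2
          exact h2.symm
        rw [hgc, hcv, inv_zpow, ← zpow_neg]
    have hat : a * t = N := by
      apply hvinj
      show v ^ (a * t) = v ^ N
      rw [zpow_mul, ← hga, hrel]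
    have hco : IsCoprime P (t : ℤ) := by
      have h1 : IsCoprime (t : ℤ) (p : ℤ) := Int.isCoprime_iff_gcd_eq_one.2 hgcd
      have h2 : IsCoprime ((p : ℤ) ^ m) (t : ℤ) := h1.symm.pow_left
      rwa [hP, Nat.cast_pow]
    have hdvd : P ∣ a := by
      refine hco.dvd_of_dvd_mul_right ?_
      exact ⟨s, by rw [hat, hN]⟩
    obtain ⟨k, hk⟩ := hdvd
    refine Subgroup.mem_zpowers_iff.2 ⟨k, ?_⟩
    rw [hu', ← zpow_mul, ← hk, ← hga]
  · -- converse direction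
    intro u v m t hpt ht1 hv1 hv hu hiso
    have hvinj : Function.Injective (fun n : ℤ => v ^ n) :=
      injective_zpow_iff_not_isOfFinOrder.2 (freeGroup_not_isOfFinOrder hv1)
    have hgcd : Int.gcd (t : ℤ) (p : ℤ) = 1 := by
      have h1 : Nat.Coprime p t := (hp.coprime_iff_not_dvd).2 hpt
      have h2 : Nat.Coprime t p := Nat.coprime_comm.1 h1
      simpa [Int.gcd_natCast_natCast] using h2
    have hmem : (v ^ (((p ^ m : ℕ)) : ℤ)) ^ (t : ℤ) ∈ Subgroup.zpowers u := by
      have : (v ^ (((p ^ m : ℕ)) : ℤ)) ^ (t : ℤ) = u := by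
        rw [← zpow_mul, hu, ← zpow_natCast]
        congr 1
      rw [this]
      exact Subgroup.mem_zpowers u
    have hin := hiso _ (t : ℤ) (by exact_mod_cast hgcd) hmem
    obtain ⟨k, hk⟩ := Subgroup.mem_zpowers_iff.1 hin
    have heq : ((p ^ m * t : ℕ) : ℤ) * k = ((p ^ m : ℕ) : ℤ) := by
      apply hvinj
      show v ^ (((p ^ m * t : ℕ) : ℤ) * k) = v ^ (((p ^ m : ℕ)) : ℤ)
      rw [zpow_mul, zpow_natCast, ← hu, hk]
    have hpm0 : ((p ^ m : ℕ) : ℤ) ≠ 0 := by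
      exact_mod_cast pow_ne_zero m hp.ne_zero
    have htk : (t : ℤ) * k = 1 := by
      push_cast at heq
      have : (p : ℤ) ^ m * ((t : ℤ) * k) = (p : ℤ) ^ m * 1 := by ring_nf; ring_nf at heq; linarith
      exact mul_left_cancel₀ (pow_ne_zero m (by exact_mod_cast hp.ne_zero)) this
    have ht1' : (t : ℤ) = 1 := Int.eq_one_of_mul_eq_one_right (by positivity) htk
    omega
end

section
/- Let F be a free group and u₁, u₂ ∈ F nontrivial elements. Then u₁ and u₂ lie in conjugate cyclic subgroups (i.e., there exist g, w ∈ F with u₁ ∈ ⟨w⟩ and u₂ ∈ g⟨w⟩g⁻¹) if and only if some nonzero power of u₁ is conjugate in F to some nonzero power of u₂. -/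
open FreeGroup

private lemma my_conj_zpow {G : Type*} [Group G] (g x : G) (n : ℤ) :
    (g * x * g⁻¹) ^ n = g * x ^ n * g⁻¹ := by
  rw [show g * x * g⁻¹ = (MulAut.conj g) x from rfl, ← map_zpow]
  rfl

private lemma my_reduce_eq_self {α : Type} [DecidableEq α] {L : List (α × Bool)}
    (h : List.Chain' (fun x y => ¬(x.1 = y.1 ∧ x.2 = !y.2)) L) :
    FreeGroup.reduce L = L := by
  induction L with
  | nil => rfl
  | cons x t ih =>
    rw [FreeGroup.reduce.cons, ih h.tail]
    cases t with
    | nil => rfl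
    | cons hd tl =>
      have hx : ¬(x.1 = hd.1 ∧ x.2 = !hd.2) := (List.isChain_cons_cons.mp h).1
      simp [hx]

private lemma my_chain_of_reduce {α : Type} [DecidableEq α] {L : List (α × Bool)}
    (h : FreeGroup.reduce L = L) :
    List.Chain' (fun x y : α × Bool => ¬(x.1 = y.1 ∧ x.2 = !y.2)) L := by
  induction L with
  | nil => exact List.isChain_nil
  | cons x t ih =>
    rw [FreeGroup.reduce.cons] at h
    rcases hrt : FreeGroup.reduce t with _ | ⟨hd, tl⟩
    · rw [hrt] at h
      have ht : t = [] := by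
        injection h with h1 h2
        exact h2.symm
      subst ht; exact List.isChain_singleton _
    · rw [hrt] at h
      replace h : (if x.1 = hd.1 ∧ x.2 = !hd.2 then tl else x :: hd :: tl) = x :: t := h
      by_cases hc : x.1 = hd.1 ∧ x.2 = !hd.2
      · rw [if_pos hc] at h
        exfalso
        have hlen : (FreeGroup.reduce t).length ≤ t.length :=
          FreeGroup.Red.length_le (FreeGroup.reduce.red)
        rw [hrt] at hlen
        have := congrArg List.length h
        simp at this hlen
        omega
      · rw [if_neg hc] at h
        have ht : t = hd :: tl := by
          injection h with _ h2
          exact h2.symm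
        have hred : FreeGroup.reduce t = t := by rw [hrt, ht]
        rw [ht]
        exact List.isChain_cons_cons.mpr ⟨hc, ht ▸ ih hred⟩

private lemma my_chain_toWord {α : Type} [DecidableEq α] (x : FreeGroup α) :
    List.Chain' (fun x y : α × Bool => ¬(x.1 = y.1 ∧ x.2 = !y.2)) x.toWord :=
  my_chain_of_reduce (FreeGroup.reduce_toWord x)

private lemma my_replicate {α : Type} [Subsingleton α] (a : α) :
    ∀ (L : List (α × Bool)),
      List.Chain' (fun x y : α × Bool => ¬(x.1 = y.1 ∧ x.2 = !y.2)) L →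
      ∃ (s : Bool) (n : ℕ), L = List.replicate n (a, s)
  | [], _ => ⟨true, 0, rfl⟩
  | x :: t, h => by
    obtain ⟨s, n, ht⟩ := my_replicate a t h.tail
    cases n with
    | zero =>
      refine ⟨x.2, 1, ?_⟩
      simp only [ht, List.replicate] at *
      have : x.1 = a := Subsingleton.elim _ _
      simp [← this]
    | succ m =>
      refine ⟨s, m + 2, ?_⟩
      have hx1 : x.1 = a := Subsingleton.elim _ _
      have hrel : ¬(x.1 = a ∧ x.2 = !s) := by
        have := List.isChain_cons_cons.mp (by rwa [ht, List.replicate_succ] at h)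
        exact this.1
      have hx2 : x.2 = s := by
        rcases Bool.eq_false_or_eq_true x.2 with h2 | h2 <;>
          rcases Bool.eq_false_or_eq_true s with h3 | h3 <;>
            simp_all
      have : x = (a, s) := Prod.ext hx1 hx2
      rw [ht, this, List.replicate_succ]
      simp [List.replicate_succ]

private lemma my_single {α : Type} [Subsingleton α] (a : α) (x : FreeGroup α) :
    ∃ k : ℤ, x = FreeGroup.of a ^ k := by
  classical
  obtain ⟨s, n, h⟩ := my_replicate a x.toWord (my_chain_toWord x)
  cases s
  · refine ⟨-(n : ℤ), ?_⟩
    have hinv : x⁻¹ = FreeGroup.of a ^ n := by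
      apply FreeGroup.toWord_injective
      rw [FreeGroup.toWord_inv, h, FreeGroup.toWord_of_pow]
      simp [FreeGroup.invRev]
    rw [zpow_neg, zpow_natCast, ← hinv, inv_inv]
  · refine ⟨(n : ℤ), ?_⟩
    apply FreeGroup.toWord_injective
    rw [zpow_natCast, h, FreeGroup.toWord_of_pow]

private lemma my_center_trivial {α : Type} (a b : α) (hab : a ≠ b) (c : FreeGroup α)
    (hc : ∀ x : FreeGroup α, Commute c x) : c = 1 := by
  classical
  by_contra h1
  have hLne : c.toWord ≠ [] := fun h => h1 (FreeGroup.toWord_eq_nil_iff.mp h)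
  set L := c.toWord with hLdef
  set x0 : α × Bool := L.head hLne with hx0
  set y0 : α × Bool := L.getLast hLne with hy0
  set j : α := if y0.1 = a then b else a with hj
  have hyj : y0.1 ≠ j := by
    by_cases h : y0.1 = a <;> simp [hj, h]
    exact h ▸ hab
  set s : Bool := x0.2 with hs
  set W : List (α × Bool) := (j, s) :: (L ++ [(j, !s)]) with hW
  have hchainL : List.Chain' (fun x y : α × Bool => ¬(x.1 = y.1 ∧ x.2 = !y.2)) L :=
    my_chain_toWord c
  have hchainW : List.Chain' (fun x y : α × Bool => ¬(x.1 = y.1 ∧ x.2 = !y.2)) W := by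
    rw [hW, List.Chain', List.isChain_cons]
    constructor
    · intro y hy
      rw [List.head?_append_of_ne_nil _ hLne, List.head?_eq_head hLne] at hy
      rw [Option.mem_some_iff] at hy
      subst hy
      rintro ⟨-, h2⟩
      simp [← hx0, ← hs] at h2
    · apply List.IsChain.append hchainL (List.isChain_singleton _)
      intro x hx y hy
      rw [List.getLast?_eq_getLast_of_ne_nil hLne, Option.mem_some_iff] at hx
      simp only [List.head?_cons, Option.mem_some_iff] at hy
      subst hx; subst hy
      rintro ⟨h1', -⟩
      exact hyj h1'
  have hWred : FreeGroup.reduce W = W := my_reduce_eq_self hchainW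
  set q : FreeGroup α := FreeGroup.mk [(j, s)] with hq
  have hqi : q⁻¹ = FreeGroup.mk [(j, !s)] := by
    rw [hq, FreeGroup.inv_mk]
    congr 1
  have hmkW : FreeGroup.mk W = q * c * q⁻¹ := by
    rw [hqi, hq]
    rw [show (c : FreeGroup α) = FreeGroup.mk L from (FreeGroup.mk_toWord).symm]
    rw [FreeGroup.mul_mk, FreeGroup.mul_mk]
    rfl
  have hWc : FreeGroup.mk W = c := by
    rw [hmkW, (hc q).symm.eq, mul_inv_cancel_right]
  have : c.toWord = W := by
    rw [← hWc, FreeGroup.toWord_mk, hWred]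
  have hlen := congrArg List.length this
  simp [hW] at hlen
  rw [← hLdef] at hlen
  omega

private lemma my_isFreeGroup_cyclic (G : Type) [Group G] [IsFreeGroup G]
    (z : G) (hz : z ≠ 1) (hcz : ∀ g : G, Commute z g) :
    ∃ p : G, (∀ g : G, ∃ k : ℤ, g = p ^ k) ∧ (∀ n : ℤ, p ^ n = 1 → n = 0) := by
  classical
  set ι := IsFreeGroup.Generators G
  set e : G ≃* FreeGroup ι := IsFreeGroup.toFreeGroup (G := G) with he
  have hez : e z ≠ 1 := fun h => hz (by simpa using congrArg e.symm h)
  have hsub : Subsingleton ι := by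
    constructor
    intro a b
    by_contra hab
    apply hez
    apply my_center_trivial a b hab
    intro x
    have : z * e.symm x = e.symm x * z := (hcz (e.symm x)).eq
    have h2 := congrArg e this
    simpa [map_mul, Commute, SemiconjBy] using h2
  have hne : Nonempty ι := by
    by_contra hemp
    apply hez
    rw [← FreeGroup.toWord_eq_nil_iff]
    rcases h : (e z).toWord with _ | ⟨p, t⟩
    · rfl
    · exact absurd ⟨p.1⟩ hemp
  obtain ⟨a⟩ := hne
  refine ⟨e.symm (FreeGroup.of a), ?_, ?_⟩
  · intro g
    obtain ⟨k, hk⟩ := my_single a (e g)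
    refine ⟨k, ?_⟩
    have := congrArg e.symm hk
    simpa [map_zpow] using this
  · intro n hn
    have h1 : (FreeGroup.of a : FreeGroup ι) ^ n = 1 := by
      have := congrArg e hn
      simpa [map_zpow] using this
    set σ : FreeGroup ι →* Multiplicative ℤ :=
      FreeGroup.lift (fun _ => Multiplicative.ofAdd 1) with hσ
    have h2 := congrArg σ h1
    rw [map_zpow] at h2
    have h3 : σ (FreeGroup.of a) = Multiplicative.ofAdd 1 := FreeGroup.lift_apply_of
    rw [h3] at h2
    have h4 := congrArg Multiplicative.toAdd h2
    simpa using h4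

private lemma my_centralizer_cyclic {α : Type} (z : FreeGroup α) (hz : z ≠ 1) :
    ∃ p : FreeGroup α, (∀ g : FreeGroup α, Commute z g → ∃ k : ℤ, g = p ^ k) ∧
      (∀ n : ℤ, p ^ n = 1 → n = 0) := by
  set C := Subgroup.centralizer ({z} : Set (FreeGroup α)) with hC
  have hmem : ∀ g : FreeGroup α, Commute z g → g ∈ C := by
    intro g hg
    rw [hC, Subgroup.mem_centralizer_iff]
    rintro h hh
    rw [Set.mem_singleton_iff] at hh
    subst hh
    exact hg.eq
  have hzC : z ∈ C := hmem z (Commute.refl z)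
  have hzn : (⟨z, hzC⟩ : C) ≠ 1 := by
    intro h
    exact hz (congrArg Subtype.val h)
  have hcen : ∀ g : C, Commute (⟨z, hzC⟩ : C) g := by
    intro g
    have h2 : z * (g : FreeGroup α) = (g : FreeGroup α) * z :=
      (Subgroup.mem_centralizer_iff.mp g.2) z (Set.mem_singleton z)
    exact Subtype.ext h2
  obtain ⟨p₀, h1, h2⟩ := my_isFreeGroup_cyclic C ⟨z, hzC⟩ hzn hcen
  refine ⟨(p₀ : FreeGroup α), ?_, ?_⟩
  · intro g hg
    obtain ⟨k, hk⟩ := h1 ⟨g, hmem g hg⟩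
    refine ⟨k, ?_⟩
    have := congrArg Subtype.val hk
    simpa using this
  · intro n hn
    apply h2 n
    apply Subtype.ext
    simpa using hn

private lemma my_torsionfree {α : Type} (u : FreeGroup α) (hu : u ≠ 1) {n : ℤ}
    (hn : u ^ n = 1) : n = 0 := by
  obtain ⟨p, h1, h2⟩ := my_centralizer_cyclic u hu
  obtain ⟨k, hk⟩ := h1 u (Commute.refl u)
  have hkn : p ^ (k * n) = 1 := by rw [zpow_mul, ← hk]; exact hn
  rcases mul_eq_zero.mp (h2 _ hkn) with hk0 | hn0
  · exact absurd (by rw [hk, hk0, zpow_zero]) hu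
  · exact hn0

theorem stmt_7 (α : Type) (u₁ u₂ : FreeGroup α) (hu₁ : u₁ ≠ 1) (hu₂ : u₂ ≠ 1) :
    (∃ (g w : FreeGroup α), (∃ k : ℤ, u₁ = w ^ k) ∧ (∃ l : ℤ, u₂ = g * w ^ l * g⁻¹)) ↔
    (∃ (a b : ℤ) (g : FreeGroup α), a ≠ 0 ∧ b ≠ 0 ∧ g * u₁ ^ a * g⁻¹ = u₂ ^ b) := by
  constructor
  · rintro ⟨g, w, ⟨k, rfl⟩, ⟨l, rfl⟩⟩
    refine ⟨l, k, g, ?_, ?_, ?_⟩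
    · rintro rfl
      exact hu₂ (by simp)
    · rintro rfl
      exact hu₁ (by simp)
    · rw [my_conj_zpow g (w ^ l) k, ← zpow_mul, ← zpow_mul, mul_comm k l]
  · rintro ⟨a, b, g, ha, hb, h⟩
    have hz : (u₂ : FreeGroup α) ^ b ≠ 1 := fun h1 => hb (my_torsionfree u₂ hu₂ h1)
    obtain ⟨p, h1, -⟩ := my_centralizer_cyclic (u₂ ^ b) hz
    have hva : (g * u₁ * g⁻¹) ^ a = u₂ ^ b := by
      rw [my_conj_zpow]; exact h
    have hcv : Commute (u₂ ^ b) (g * u₁ * g⁻¹) := by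
      rw [← hva]
      exact (Commute.refl _).zpow_left a
    obtain ⟨k, hk⟩ := h1 _ hcv
    obtain ⟨l, hl⟩ := h1 u₂ ((Commute.refl u₂).zpow_left b)
    refine ⟨g, g⁻¹ * p * g, ⟨k, ?_⟩, ⟨l, ?_⟩⟩
    · have h3 : (g⁻¹ * p * g) ^ k = g⁻¹ * p ^ k * g := by
        have := my_conj_zpow g⁻¹ p k
        simpa using this
      rw [h3, ← hk]
      group
    · have h3 : (g⁻¹ * p * g) ^ l = g⁻¹ * p ^ l * g := by
        have := my_conj_zpow g⁻¹ p l
        simpa using this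
      rw [h3, ← hl]
      group
end
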